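/- Fix reals δ > 0, b > 0, c > 0 and define the Hopfield–Ninio kinetic-regime error fraction ξ(η) = (1 + e^{−δ} η b + e^{−2δ} η c) / (1 + η b + η c) for η > 0. Then: (i) e^{−2δ} < ξ(η) < 1 for every η > 0; (ii) ξ is strictly decreasing on (0, ∞); and (iii) lim_{η→∞} ξ(η) = (e^{−δ} b + e^{−2δ} c)/(b + c), which in turn tends to e^{−2δ} as c/b → ∞. -/
import Mathlib


open Filter Topology

/-- The Hopfield–Ninio kinetic-regime error fraction
`ξ(η) = (1 + e^{−δ} η b + e^{−2δ} η c) / (1 + η b + η c)`. -/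
noncomputable def kineticError (δ b c η : ℝ) : ℝ :=
  (1 + Real.exp (-δ) * η * b + Real.exp (-(2 * δ)) * η * c) / (1 + η * b + η * c)

/-- For `δ > 0`, `b > 0`, `c > 0`: (i) `e^{−2δ} < ξ(η) < 1` for every `η > 0`;
(ii) `ξ` is strictly decreasing on `(0, ∞)`; (iii) `ξ(η) → (e^{−δ} b + e^{−2δ} c)/(b + c)`
as `η → ∞`, and this limit tends to `e^{−2δ}` as `c → ∞` (i.e. as `c/b → ∞`). -/
theorem kineticError_properties (δ b c : ℝ) (hδ : 0 < δ) (hb : 0 < b) (hc : 0 < c) :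
    (∀ η : ℝ, 0 < η →
        Real.exp (-(2 * δ)) < kineticError δ b c η ∧ kineticError δ b c η < 1)
    ∧ StrictAntiOn (kineticError δ b c) (Set.Ioi 0)
    ∧ Tendsto (kineticError δ b c) atTop
        (𝓝 ((Real.exp (-δ) * b + Real.exp (-(2 * δ)) * c) / (b + c)))
    ∧ Tendsto (fun c' : ℝ => (Real.exp (-δ) * b + Real.exp (-(2 * δ)) * c') / (b + c'))
        atTop (𝓝 (Real.exp (-(2 * δ)))) := by
  set A := Real.exp (-δ) with hA
  have hApos : 0 < A := Real.exp_pos _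
  have hA1 : A < 1 := by
    rw [hA]; exact Real.exp_lt_one_iff.mpr (by linarith)
  have hsq : Real.exp (-(2 * δ)) = A * A := by
    rw [hA, ← Real.exp_add]; ring_nf
  have hA2lt : A * A < A := by nlinarith
  refine ⟨?_, ?_, ?_, ?_⟩
  · intro η hη
    have hD : 0 < 1 + η * b + η * c := by positivity
    constructor
    · rw [hsq, kineticError, lt_div_iff₀ hD, hsq]
      nlinarith [mul_pos hη hb, mul_pos hη hc, mul_pos hApos hApos]
    · rw [kineticError, div_lt_one hD, hsq]
      nlinarith [mul_pos hη hb, mul_pos hη hc]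
  · intro x hx y hy hxy
    simp only [Set.mem_Ioi] at hx hy
    have hDx : 0 < 1 + x * b + x * c := by positivity
    have hDy : 0 < 1 + y * b + y * c := by positivity
    rw [kineticError, kineticError, div_lt_div_iff₀ hDy hDx, hsq]
    nlinarith [mul_pos (sub_pos.mpr hxy) hb, mul_pos (sub_pos.mpr hxy) hc,
      mul_pos hApos hApos]
  · have hq : (0:ℝ) + (b + c) ≠ 0 := by positivity
    have ht : Tendsto (fun η : ℝ => (η⁻¹ + (A * b + Real.exp (-(2 * δ)) * c)) /
        (η⁻¹ + (b + c))) atTop (𝓝 ((0 + (A * b + Real.exp (-(2 * δ)) * c)) / (0 + (b + c)))) :=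
      Tendsto.div (tendsto_inv_atTop_zero.add tendsto_const_nhds)
        (tendsto_inv_atTop_zero.add tendsto_const_nhds) hq
    simp only [zero_add] at ht
    refine ht.congr' ?_
    filter_upwards [eventually_gt_atTop (0:ℝ)] with η hη
    have hη' : η ≠ 0 := ne_of_gt hη
    rw [kineticError]
    rw [div_eq_div_iff (by positivity) (by positivity)]
    field_simp
    ring
  · have hq : (0:ℝ) + 1 ≠ 0 := by norm_num
    have ht : Tendsto (fun c' : ℝ => (A * b * c'⁻¹ + Real.exp (-(2 * δ))) /
        (b * c'⁻¹ + 1)) atTop (𝓝 ((A * b * 0 + Real.exp (-(2 * δ))) / (b * 0 + 1))) := by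
      refine Tendsto.div ?_ ?_ (by norm_num)
      · exact ((tendsto_inv_atTop_zero.const_mul _)).add tendsto_const_nhds
      · exact ((tendsto_inv_atTop_zero.const_mul _)).add tendsto_const_nhds
    simp only [mul_zero, zero_add, add_zero, div_one] at ht
    refine ht.congr' ?_
    filter_upwards [eventually_gt_atTop (0:ℝ)] with c' hc'
    have : c' ≠ 0 := ne_of_gt hc'
    rw [div_eq_div_iff (by positivity) (by positivity)]
    field_simp
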